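/- Let a, x₅, y₅ ∈ ℝ³. Define c = (a₁(a₂−a₃), a₂(a₃−a₁), a₃(a₁−a₂)) ∈ ℝ³ and d = (a₁·y₅,₁·(a₂x₅,₃ − a₃x₅,₂), a₂·y₅,₂·(a₃x₅,₁ − a₁x₅,₃), a₃·y₅,₃·(a₁x₅,₂ − a₂x₅,₁)) ∈ ℝ³, and set v = c × d. Assume v ≠ 0. If b, b′ ∈ ℝ³ each have all three coordinates nonzero and both satisfy e₄ᵀ·diag(a)·[a⊙b]_×·diag(b)·e₄ = 0 and y₅ᵀ·diag(a)·[a⊙b]_×·diag(b)·x₅ = 0 (and the same two equations with b replaced by b′), then b ∼ b′; indeed both are nonzero scalar multiples of (v₂v₃, v₁v₃, v₁v₂). -/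
import Mathlib


open Matrix

/-- `u ∼ v`: the vectors are equal up to a nonzero real scalar. -/
def Sim {k : ℕ} (u v : Fin k → ℝ) : Prop := ∃ c : ℝ, c ≠ 0 ∧ u = c • v

/-- The cross product on ℝ³. -/
def cross3 (u v : Fin 3 → ℝ) : Fin 3 → ℝ :=
  ![u 1 * v 2 - u 2 * v 1, u 2 * v 0 - u 0 * v 2, u 0 * v 1 - u 1 * v 0]

/-- The 3×3 skew-symmetric matrix `[v]ₓ` of the cross product: `[v]ₓ · u = v × u`. -/
def crossMat (v : Fin 3 → ℝ) : Matrix (Fin 3) (Fin 3) ℝ :=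
  !![0, -v 2, v 1; v 2, 0, -v 0; -v 1, v 0, 0]

lemma expand_eq (a b x y : Fin 3 → ℝ) :
    y ⬝ᵥ (Matrix.diagonal a * crossMat (a * b) * Matrix.diagonal b).mulVec x =
    a 0 * y 0 * (a 1 * x 2 - a 2 * x 1) * (b 1 * b 2)
    + a 1 * y 1 * (a 2 * x 0 - a 0 * x 2) * (b 0 * b 2)
    + a 2 * y 2 * (a 0 * x 1 - a 1 * x 0) * (b 0 * b 1) := by
  simp [dotProduct, Matrix.mulVec, Matrix.mul_apply, crossMat, Matrix.diagonal,
    Fin.sum_univ_three, Pi.mul_apply]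
  ring

lemma key_scalar (c0 c1 c2 d0 d1 d2 b0 b1 b2 : ℝ)
    (hb0 : b0 ≠ 0) (hb1 : b1 ≠ 0) (hb2 : b2 ≠ 0)
    (h1 : c0 * (b1*b2) + c1 * (b0*b2) + c2 * (b0*b1) = 0)
    (h2 : d0 * (b1*b2) + d1 * (b0*b2) + d2 * (b0*b1) = 0)
    (hv : ¬((c1*d2 - c2*d1) = 0 ∧ (c2*d0 - c0*d2) = 0 ∧ (c0*d1 - c1*d0) = 0)) :
    ∃ lam : ℝ, lam ≠ 0 ∧
      b0 = lam * ((c2*d0 - c0*d2)*(c0*d1 - c1*d0)) ∧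
      b1 = lam * ((c1*d2 - c2*d1)*(c0*d1 - c1*d0)) ∧
      b2 = lam * ((c1*d2 - c2*d1)*(c2*d0 - c0*d2)) := by
  obtain ⟨v0, hv0d⟩ : ∃ v0, v0 = c1*d2 - c2*d1 := ⟨_, rfl⟩
  obtain ⟨v1, hv1d⟩ : ∃ v1, v1 = c2*d0 - c0*d2 := ⟨_, rfl⟩
  obtain ⟨v2, hv2d⟩ : ∃ v2, v2 = c0*d1 - c1*d0 := ⟨_, rfl⟩
  rw [← hv0d, ← hv1d, ← hv2d] at hv ⊢
  have e1 : v2 * (b1*b2) - v0 * (b0*b1) = 0 := by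
    rw [hv0d, hv2d]; linear_combination d1 * h1 - c1 * h2
  have e2 : v0 * (b0*b2) - v1 * (b1*b2) = 0 := by
    rw [hv0d, hv1d]; linear_combination d2 * h1 - c2 * h2
  have hw0 : b1*b2 ≠ 0 := mul_ne_zero hb1 hb2
  have hw1 : b0*b2 ≠ 0 := mul_ne_zero hb0 hb2
  have hw2 : b0*b1 ≠ 0 := mul_ne_zero hb0 hb1
  have hv0 : v0 ≠ 0 := by
    intro h0
    refine hv ⟨h0, ?_, ?_⟩
    · have h : v1 * (b1*b2) = 0 := by rw [h0] at e2; linarith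
      exact (mul_eq_zero.mp h).resolve_right hw0
    · have h : v2 * (b1*b2) = 0 := by rw [h0] at e1; linarith
      exact (mul_eq_zero.mp h).resolve_right hw0
  have hd : v0^2 * (b0*b1*b2) ≠ 0 :=
    mul_ne_zero (pow_ne_zero 2 hv0) (mul_ne_zero hw2 hb2)
  refine ⟨(b1*b2)^2 / (v0^2 * (b0*b1*b2)), div_ne_zero (pow_ne_zero 2 hw0) hd, ?_, ?_, ?_⟩
  · rw [div_mul_eq_mul_div, eq_div_iff hd]
    linear_combination (-(v0*(b0*b2))) * e1 + ((b1*b2)*v2) * e2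
  · rw [div_mul_eq_mul_div, eq_div_iff hd]
    linear_combination (-(v0*(b1*b2))) * e1
  · rw [div_mul_eq_mul_div, eq_div_iff hd]
    linear_combination (v0*(b1*b2)) * e2

/-- Uniqueness assertion of Theorem 22 (n = 5): once the first camera center
`a` is chosen, the second camera center `b` is uniquely determined (up to a
nonzero scalar) as the fourth intersection point of two conics. -/
theorem five_points_second_center_unique (a x₅ y₅ : Fin 3 → ℝ) :
    let c : Fin 3 → ℝ :=
      ![a 0 * (a 1 - a 2), a 1 * (a 2 - a 0), a 2 * (a 0 - a 1)]
    let d : Fin 3 → ℝ :=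
      ![a 0 * y₅ 0 * (a 1 * x₅ 2 - a 2 * x₅ 1),
        a 1 * y₅ 1 * (a 2 * x₅ 0 - a 0 * x₅ 2),
        a 2 * y₅ 2 * (a 0 * x₅ 1 - a 1 * x₅ 0)]
    let v := cross3 c d
    v ≠ 0 →
    ∀ b b' : Fin 3 → ℝ, (∀ i, b i ≠ 0) → (∀ i, b' i ≠ 0) →
      (fun _ : Fin 3 => (1 : ℝ)) ⬝ᵥ
        (Matrix.diagonal a * crossMat (a * b) * Matrix.diagonal b).mulVec
          (fun _ => (1 : ℝ)) = 0 →
      y₅ ⬝ᵥ (Matrix.diagonal a * crossMat (a * b) * Matrix.diagonal b).mulVec x₅ = 0 →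
      (fun _ : Fin 3 => (1 : ℝ)) ⬝ᵥ
        (Matrix.diagonal a * crossMat (a * b') * Matrix.diagonal b').mulVec
          (fun _ => (1 : ℝ)) = 0 →
      y₅ ⬝ᵥ (Matrix.diagonal a * crossMat (a * b') * Matrix.diagonal b').mulVec x₅ = 0 →
      (∃ lam : ℝ, lam ≠ 0 ∧ b = lam • ![v 1 * v 2, v 0 * v 2, v 0 * v 1]) ∧
      (∃ lam : ℝ, lam ≠ 0 ∧ b' = lam • ![v 1 * v 2, v 0 * v 2, v 0 * v 1]) ∧
      Sim b b' := by
  intro c d v hv b b' hb hb' E1 E2 E1' E2'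
  set C0 : ℝ := a 0 * (a 1 - a 2) with hC0
  set C1 : ℝ := a 1 * (a 2 - a 0) with hC1
  set C2 : ℝ := a 2 * (a 0 - a 1) with hC2
  set D0 : ℝ := a 0 * y₅ 0 * (a 1 * x₅ 2 - a 2 * x₅ 1) with hD0
  set D1 : ℝ := a 1 * y₅ 1 * (a 2 * x₅ 0 - a 0 * x₅ 2) with hD1
  set D2 : ℝ := a 2 * y₅ 2 * (a 0 * x₅ 1 - a 1 * x₅ 0) with hD2
  have hV0 : v 0 = C1 * D2 - C2 * D1 := rfl
  have hV1 : v 1 = C2 * D0 - C0 * D2 := rfl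
  have hV2 : v 2 = C0 * D1 - C1 * D0 := rfl
  have hnv : ¬((C1*D2 - C2*D1) = 0 ∧ (C2*D0 - C0*D2) = 0 ∧ (C0*D1 - C1*D0) = 0) := by
    rintro ⟨z0, z1, z2⟩
    apply hv
    funext i
    fin_cases i
    · exact hV0.trans z0
    · exact hV1.trans z1
    · exact hV2.trans z2
  have mk : ∀ bb : Fin 3 → ℝ, (∀ i, bb i ≠ 0) →
      (fun _ : Fin 3 => (1 : ℝ)) ⬝ᵥ
        (Matrix.diagonal a * crossMat (a * bb) * Matrix.diagonal bb).mulVec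
          (fun _ => (1 : ℝ)) = 0 →
      y₅ ⬝ᵥ (Matrix.diagonal a * crossMat (a * bb) * Matrix.diagonal bb).mulVec x₅ = 0 →
      ∃ lam : ℝ, lam ≠ 0 ∧ bb = lam • ![v 1 * v 2, v 0 * v 2, v 0 * v 1] := by
    intro bb hbb F1 F2
    rw [expand_eq] at F1 F2
    obtain ⟨lam, hlam, g0, g1, g2⟩ :=
      key_scalar C0 C1 C2 D0 D1 D2 (bb 0) (bb 1) (bb 2) (hbb 0) (hbb 1) (hbb 2)
        (by rw [hC0, hC1, hC2]; linear_combination F1)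
        (by rw [hD0, hD1, hD2]; linear_combination F2)
        hnv
    refine ⟨lam, hlam, ?_⟩
    funext i
    fin_cases i
    · show bb 0 = lam * (v 1 * v 2)
      rw [hV1, hV2]; exact g0
    · show bb 1 = lam * (v 0 * v 2)
      rw [hV0, hV2]; exact g1
    · show bb 2 = lam * (v 0 * v 1)
      rw [hV0, hV1]; exact g2
  obtain ⟨lam, hlam, hbeq⟩ := mk b hb E1 E2
  obtain ⟨lam', hlam', hbeq'⟩ := mk b' hb' E1' E2'
  refine ⟨⟨lam, hlam, hbeq⟩, ⟨lam', hlam', hbeq'⟩,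
    lam / lam', div_ne_zero hlam hlam', ?_⟩
  rw [hbeq, hbeq', smul_smul, div_mul_cancel₀ _ hlam']
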